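/- Let S be a set of paths each of length at least 2 in a finite quiver, with len(S) the maximal length of paths in S. For every n ≥ 0, if O_n(S) is nonempty then every n-overlap w ∈ O_n(S) satisfies n + 1 ≤ len(w) ≤ len(S)·n − n + 1 (for n ≥ 1); equivalently mino_n(S) ≥ n + 1 and maxo_n(S) ≤ len(S)·n − n + 1. -/

import Mathlib

universe u v

/-! Combinatorics of paths in a quiver: divisibility, overlaps, quasioverlaps. -/

/-- The type of all paths in a quiver `V`, bundled with their endpoints. -/
abbrev PathIn (V : Type u) [Quiver.{v + 1} V] : Type (max u (v + 1)) :=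
  Σ a b : V, Quiver.Path a b

namespace PathIn

variable {V : Type u} [Quiver.{v + 1} V]

/-- Source of a bundled path. -/
def src (p : PathIn V) : V := p.1

/-- Target of a bundled path. -/
def tgt (p : PathIn V) : V := p.2.1

/-- Length of a bundled path. -/
def len (p : PathIn V) : ℕ := p.2.2.length

/-- The path of length zero at a vertex. -/
def vert (a : V) : PathIn V := ⟨a, a, Quiver.Path.nil⟩

/-- Concatenation of bundled paths (junk value `p` if the endpoints do not match). -/
noncomputable def comp (p q : PathIn V) : PathIn V :=
  open Classical in
  if h : p.tgt = q.src then ⟨p.1, q.2.1, p.2.2.comp (q.2.2.cast h.symm rfl)⟩ else p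

/-- `LDiv p q` : `p` divides `q` on the left, i.e. `q = p v` for some path `v`. -/
def LDiv (p q : PathIn V) : Prop :=
  ∃ v : PathIn V, p.tgt = v.src ∧ q = p.comp v

/-- `RDiv p q` : `p` divides `q` on the right, i.e. `q = u p` for some path `u`. -/
def RDiv (p q : PathIn V) : Prop :=
  ∃ u : PathIn V, u.tgt = p.src ∧ q = u.comp p

/-- `Div p q` : `p` divides `q`, i.e. `q = u p v` for some paths `u, v`. -/
def Div (p q : PathIn V) : Prop :=
  ∃ u v : PathIn V, u.tgt = p.src ∧ p.tgt = v.src ∧ q = (u.comp p).comp v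

/-- A set of paths is reduced if no element of it properly divides another element. -/
def Reduced (S : Set (PathIn V)) : Prop :=
  ∀ q ∈ S, ∀ p ∈ S, p ≠ q → ¬ Div p q

/-- `p` is an `S`-path if some element of `S` divides it on the right. -/
def IsSPath (S : Set (PathIn V)) (p : PathIn V) : Prop :=
  ∃ s ∈ S, RDiv s p

/-- `q` `S`-vanishes `p` (written `q ∣_S p`): `p = q u` where no element of `S` divides `u`. -/
def SVan (S : Set (PathIn V)) (q p : PathIn V) : Prop :=
  ∃ u : PathIn V, q.tgt = u.src ∧ p = q.comp u ∧ ∀ s ∈ S, ¬ Div s u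

/-- `q` almost `S`-vanishes `p` (written `q ∣_S^a p`): `p = q u`, `q` does not `S`-vanish `p`,
and for every factorization `u = u₁ u₂` with `u₂` of positive length, `q` `S`-vanishes `q u₁`. -/
def ASVan (S : Set (PathIn V)) (q p : PathIn V) : Prop :=
  ∃ u : PathIn V, q.tgt = u.src ∧ p = q.comp u ∧ ¬ SVan S q p ∧
    ∀ u₁ u₂ : PathIn V, u₁.tgt = u₂.src → u = u₁.comp u₂ → 0 < u₂.len →
      SVan S q (q.comp u₁)

/-- The set of `n`-overlaps of a set of paths `S`. -/
def Overlaps (S : Set (PathIn V)) : ℕ → Set (PathIn V)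
  | 0 => {p | p.len = 1}
  | 1 => S
  | (n + 2) => {w | ∃ w₁ ∈ Overlaps S (n + 1), ∃ w₂ ∈ Overlaps S n,
      SVan S w₁ w ∧ ASVan S w₂ w}

/-- The set of `n`-quasioverlaps of a set of paths `S`: pairs `(w, v)` with `v` of
positive length. -/
def QOverlaps (S : Set (PathIn V)) : ℕ → Set (PathIn V × PathIn V)
  | 0 => {wv | wv.1.len = 0 ∧ 0 < wv.2.len ∧ wv.2.tgt = wv.1.src}
  | 1 => {wv | 0 < wv.1.len ∧ 0 < wv.2.len ∧ wv.2.tgt = wv.1.src ∧ wv.2.comp wv.1 ∈ S}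
  | (n + 2) => {wv | ∃ w₁, (w₁, wv.2) ∈ QOverlaps S (n + 1) ∧
      ∃ w₂, (w₂, wv.2) ∈ QOverlaps S n ∧ SVan S w₁ wv.1 ∧ ASVan S w₂ wv.1}

/-- `sup` of the lengths of the `n`-overlaps of `S`, in `EReal` (`-∞` if there are none). -/
noncomputable def maxo (S : Set (PathIn V)) (n : ℕ) : EReal :=
  sSup ((fun w => (w.len : EReal)) '' Overlaps S n)

/-- `inf` of the lengths of the `n`-overlaps of `S`, in `EReal` (`+∞` if there are none). -/
noncomputable def mino (S : Set (PathIn V)) (n : ℕ) : EReal :=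
  sInf ((fun w => (w.len : EReal)) '' Overlaps S n)

/-- `sup` of the lengths of the first components of `n`-quasioverlaps of `S`. -/
noncomputable def maxqo (S : Set (PathIn V)) (n : ℕ) : EReal :=
  sSup ((fun w => (w.len : EReal)) '' {w | ∃ v, (w, v) ∈ QOverlaps S n})

/-- `inf` of the lengths of the first components of `n`-quasioverlaps of `S`. -/
noncomputable def minqo (S : Set (PathIn V)) (n : ℕ) : EReal :=
  sInf ((fun w => (w.len : EReal)) '' {w | ∃ v, (w, v) ∈ QOverlaps S n})

end PathIn

section Helpers

variable {V : Type u} [Quiver.{v + 1} V]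

/-- Unbundled suffix-comparison lemma: if `x.comp y = x'.comp y'` and `y'` is shorter
than `y`, then `y'` is a suffix of `y`. -/
lemma suffix_aux {a : V} {b' c : V} (y' : Quiver.Path b' c) :
    ∀ {b : V} (x : Quiver.Path a b) (y : Quiver.Path b c) (x' : Quiver.Path a b'),
      x.comp y = x'.comp y' → y'.length ≤ y.length →
      ∃ m : Quiver.Path b b', y = m.comp y' ∧ x' = x.comp m := by
  induction y' with
  | nil =>
    intro b x y x' h _
    exact ⟨y, by simp, by simpa using h.symm⟩
  | cons q' e' ih =>
    intro b x y x' h hlen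
    cases y with
    | nil => simp at hlen
    | cons q e =>
      rw [Quiver.Path.comp_cons, Quiver.Path.comp_cons] at h
      obtain rfl := Quiver.Path.obj_eq_of_cons_eq_cons h
      obtain rfl := eq_of_heq (Quiver.Path.hom_heq_of_cons_eq_cons h)
      have h2 : x.comp q = x'.comp q' := eq_of_heq (Quiver.Path.heq_of_cons_eq_cons h)
      obtain ⟨m, hm1, hm2⟩ := ih x q x' h2 (by simpa using hlen)
      exact ⟨m, by rw [Quiver.Path.comp_cons, hm1], hm2⟩

namespace PathIn

@[simp] lemma src_mk (a b : V) (p : Quiver.Path a b) : PathIn.src ⟨a, b, p⟩ = a := rfl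
@[simp] lemma tgt_mk (a b : V) (p : Quiver.Path a b) : PathIn.tgt ⟨a, b, p⟩ = b := rfl
@[simp] lemma len_mk (a b : V) (p : Quiver.Path a b) : PathIn.len ⟨a, b, p⟩ = p.length := rfl

lemma mk_comp_mk (a b c : V) (p : Quiver.Path a b) (q : Quiver.Path b c) :
    PathIn.comp ⟨a, b, p⟩ ⟨b, c, q⟩ = ⟨a, c, p.comp q⟩ := by
  unfold PathIn.comp
  split
  · exact congrArg (fun r => (⟨a, c, r⟩ : PathIn V))
      (congrArg (fun r => p.comp r) (Quiver.Path.cast_rfl_rfl q))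
  · next h => exact absurd rfl h

lemma len_comp {p q : PathIn V} (h : p.tgt = q.src) :
    (p.comp q).len = p.len + q.len := by
  obtain ⟨a, b, p⟩ := p
  obtain ⟨b', c, q⟩ := q
  obtain rfl : b = b' := h
  rw [mk_comp_mk]
  simp [Quiver.Path.length_comp]

lemma src_comp {p q : PathIn V} (h : p.tgt = q.src) :
    (p.comp q).src = p.src := by
  obtain ⟨a, b, p⟩ := p
  obtain ⟨b', c, q⟩ := q
  obtain rfl : b = b' := h
  rw [mk_comp_mk]
  rfl

lemma tgt_comp {p q : PathIn V} (h : p.tgt = q.src) :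
    (p.comp q).tgt = q.tgt := by
  obtain ⟨a, b, p⟩ := p
  obtain ⟨b', c, q⟩ := q
  obtain rfl : b = b' := h
  rw [mk_comp_mk]
  rfl

lemma comp_assoc' {p q r : PathIn V} (h1 : p.tgt = q.src) (h2 : q.tgt = r.src) :
    (p.comp q).comp r = p.comp (q.comp r) := by
  obtain ⟨a, b, p⟩ := p
  obtain ⟨b', c, q⟩ := q
  obtain rfl : b = b' := h1
  obtain ⟨c', d, r⟩ := r
  obtain rfl : c = c' := h2
  rw [mk_comp_mk, mk_comp_mk, mk_comp_mk, mk_comp_mk, Quiver.Path.comp_assoc]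

lemma comp_cancel {p q r : PathIn V} (h : p.tgt = q.src) (h' : p.tgt = r.src)
    (heq : p.comp q = p.comp r) : q = r := by
  obtain ⟨a, b, p⟩ := p
  obtain ⟨b', c, q⟩ := q
  obtain rfl : b = b' := h
  obtain ⟨b'', c', r⟩ := r
  obtain rfl : b = b'' := h'
  rw [mk_comp_mk, mk_comp_mk] at heq
  obtain rfl : c = c' := congrArg (fun z : PathIn V => z.2.1) heq
  simp only [Sigma.mk.inj_iff, heq_eq_eq, true_and] at heq
  rw [Quiver.Path.comp_inj_right] at heq
  rw [heq]

lemma comp_zero {p q : PathIn V} (h : p.tgt = q.src) (hq : q.len = 0) :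
    p.comp q = p := by
  obtain ⟨a, b, p⟩ := p
  obtain ⟨b', c, q⟩ := q
  obtain rfl : b = b' := h
  obtain rfl : b = c := Quiver.Path.eq_of_length_zero q (by simpa using hq)
  obtain rfl : q = Quiver.Path.nil := Quiver.Path.eq_nil_of_length_zero q (by simpa using hq)
  rw [mk_comp_mk, Quiver.Path.comp_nil]

lemma exists_last {p : PathIn V} (h : 0 < p.len) :
    ∃ q e : PathIn V, q.tgt = e.src ∧ e.len = 1 ∧ p = q.comp e ∧
      q.len + 1 = p.len ∧ q.src = p.src := by
  obtain ⟨a, c, p⟩ := p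
  cases p with
  | nil => simp at h
  | cons q0 e0 =>
    refine ⟨⟨a, _, q0⟩, ⟨_, c, e0.toPath⟩, rfl, rfl, ?_, rfl, rfl⟩
    rw [mk_comp_mk]
    rfl

lemma suffix_lemma {x y x' y' : PathIn V} (h1 : x.tgt = y.src) (h2 : x'.tgt = y'.src)
    (heq : x.comp y = x'.comp y') (hlen : y'.len ≤ y.len) :
    ∃ m : PathIn V, x.tgt = m.src ∧ m.tgt = y'.src ∧ y = m.comp y' ∧ x' = x.comp m := by
  obtain ⟨a, b, x⟩ := x
  obtain ⟨b2, c, y⟩ := y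
  obtain rfl : b = b2 := h1
  obtain ⟨a2, b', x'⟩ := x'
  obtain ⟨b2', c2, y'⟩ := y'
  obtain rfl : b' = b2' := h2
  rw [mk_comp_mk, mk_comp_mk] at heq
  obtain rfl : a = a2 := congrArg (fun z : PathIn V => z.1) heq
  obtain rfl : c = c2 := congrArg (fun z : PathIn V => z.2.1) heq
  simp only [Sigma.mk.inj_iff, heq_eq_eq, true_and] at heq
  obtain ⟨m, hm1, hm2⟩ := suffix_aux y' x y x' heq (by simpa using hlen)
  refine ⟨⟨b, b', m⟩, rfl, rfl, ?_, ?_⟩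
  · rw [mk_comp_mk, hm1]
  · rw [mk_comp_mk, hm2]

lemma div_len_le {s q : PathIn V} (h : PathIn.Div s q) : s.len ≤ q.len := by
  obtain ⟨u, v, h1, h2, h3⟩ := h
  have htgt : (u.comp s).tgt = v.src := by rw [tgt_comp h1]; exact h2
  rw [h3, len_comp htgt, len_comp h1]
  omega

lemma div_of_suffix {s m u : PathIn V} (hm : m.tgt = s.src) (h : u = m.comp s) :
    PathIn.Div s u := by
  refine ⟨m, PathIn.vert s.tgt, hm, rfl, ?_⟩
  rw [comp_zero (p := m.comp s) (q := PathIn.vert s.tgt) (by rw [tgt_comp hm]; rfl) rfl]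
  exact h

end PathIn

end Helpers

/-- bounds for the lengths of `n`-overlaps: every `w ∈ O_n(S)` satisfies
`n + 1 ≤ len w`, and `len w ≤ len(S)·n - n + 1` for `n ≥ 1`; equivalently
`mino_n(S) ≥ n + 1` and `maxo_n(S) ≤ len(S)·n - n + 1`. -/
theorem overlap_length_bounds {V : Type u} [Quiver.{v + 1} V]
    [Fintype V] [∀ a b : V, Fintype (a ⟶ b)]
    (S : Set (PathIn V)) (hS : ∀ p ∈ S, 2 ≤ p.len)
    (L : ℕ) (hL : IsGreatest (PathIn.len '' S) L) (n : ℕ) :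
    (∀ w ∈ PathIn.Overlaps S n,
        (n : ℤ) + 1 ≤ (w.len : ℤ) ∧ (1 ≤ n → (w.len : ℤ) ≤ (L : ℤ) * n - n + 1)) ∧
    ((n : EReal) + 1 ≤ PathIn.mino S n) ∧
    (1 ≤ n → PathIn.maxo S n ≤ (L : EReal) * (n : EReal) - (n : EReal) + 1) := by
  have hL2 : 2 ≤ L := by
    obtain ⟨p, hp, hpl⟩ := hL.1
    have := hS p hp
    omega
  have key : ∀ n : ℕ, ∀ w ∈ PathIn.Overlaps S n,
      (n : ℤ) + 1 ≤ (w.len : ℤ) ∧ (1 ≤ n → (w.len : ℤ) ≤ (L : ℤ) * n - n + 1) := by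
    intro n
    induction n using Nat.strong_induction_on with
    | _ n ih =>
      match n with
      | 0 =>
        intro w hw
        have h1 : w.len = 1 := hw
        constructor
        · omega
        · omega
      | 1 =>
        intro w hw
        have h1 : 2 ≤ w.len := hS w hw
        have h2 : w.len ≤ L := hL.2 ⟨w, hw, rfl⟩
        constructor
        · omega
        · intro _
          push_cast
          omega
      | (m + 2) =>
        intro w hw
        obtain ⟨w₁, hw₁, w₂, hw₂, hsv, hasv⟩ := hw
        have ih1 := ih (m + 1) (by omega) w₁ hw₁
        have ih2 := ih m (by omega) w₂ hw₂
        obtain ⟨u, hu1, hu2, hu3⟩ := hsv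
        obtain ⟨u', hv1, hv2, hnsv, hall⟩ := hasv
        -- some element of `S` divides `u'`
        have hsdiv : ∃ s ∈ S, PathIn.Div s u' := by
          by_contra hcon
          push_neg at hcon
          exact hnsv ⟨u', hv1, hv2, fun s hs => hcon s hs⟩
        obtain ⟨s, hsS, hdiv⟩ := hsdiv
        obtain ⟨a, b, hab1, hab2, hab3⟩ := hdiv
        have hsl : 2 ≤ s.len := hS s hsS
        have hsL : s.len ≤ L := hL.2 ⟨s, hsS, rfl⟩
        have hu'len : s.len ≤ u'.len := PathIn.div_len_le ⟨a, b, hab1, hab2, hab3⟩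
        have hwlen : w.len = w₂.len + u'.len := by rw [hv2, PathIn.len_comp hv1]
        have hwlen1 : w.len = w₁.len + u.len := by rw [hu2, PathIn.len_comp hu1]
        -- decompose `u'` as `u₁` followed by its last arrow `e`
        obtain ⟨u₁, e, hue, helen, hu'eq, hu1len, hu1src⟩ :=
          PathIn.exists_last (p := u') (by omega)
        have hwu₁ : w₂.tgt = u₁.src := by rw [hv1, ← hu1src]
        -- no element of `S` divides `u₁`
        have hndiv : ∀ s' ∈ S, ¬ PathIn.Div s' u₁ := by
          obtain ⟨t, ht1, ht2, ht3⟩ := hall u₁ e hue hu'eq (by omega)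
          have : u₁ = t := PathIn.comp_cancel hwu₁ ht1 ht2
          rw [this]
          exact ht3
        -- endpoint bookkeeping
        have habtgt : (a.comp s).tgt = b.src := by rw [PathIn.tgt_comp hab1]; exact hab2
        -- the factor `b` has length zero, so `s` is a suffix of `u'`
        have hb0 : b.len = 0 := by
          by_contra hb
          obtain ⟨b₁, e', hbe, he'len, hbeq, hb1len, hb1src⟩ :=
            PathIn.exists_last (p := b) (by omega)
          have habt1 : (a.comp s).tgt = b₁.src := by rw [habtgt, ← hb1src]
          have hx'tgt : ((a.comp s).comp b₁).tgt = e'.src := by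
            rw [PathIn.tgt_comp habt1]; exact hbe
          have heq2 : u₁.comp e = ((a.comp s).comp b₁).comp e' := by
            rw [← hu'eq, hab3, hbeq, ← PathIn.comp_assoc' habt1 hbe]
          obtain ⟨mm, hm1, hm2, hm3, hm4⟩ :=
            PathIn.suffix_lemma hue hx'tgt heq2 (by omega)
          have hmlen : mm.len = 0 := by
            have := PathIn.len_comp (p := mm) (q := e') hm2
            rw [← hm3] at this
            omega
          have hu₁eq : (a.comp s).comp b₁ = u₁ := by
            rw [hm4, PathIn.comp_zero hm1 hmlen]
          exact hndiv s hsS ⟨a, b₁, hab1, by rw [hab2, ← hb1src], hu₁eq.symm⟩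
        have hu'ab : u' = a.comp s := by
          rw [hab3, PathIn.comp_zero habtgt hb0]
        have hblen : u'.len = a.len + s.len := by rw [hu'ab, PathIn.len_comp hab1]
        -- `w = (w₂ a) s` with `s` a suffix
        have hw2a : w₂.tgt = a.src := by
          rw [hv1, hu'ab, PathIn.src_comp hab1]
        have hwfact : w₁.comp u = (w₂.comp a).comp s := by
          rw [← hu2, hv2, hu'ab, ← PathIn.comp_assoc' hw2a hab1]
        -- `u` is shorter than `s`
        have hus : u.len < s.len := by
          by_contra hcon
          push_neg at hcon
          obtain ⟨mm, hm1, hm2, hm3, hm4⟩ :=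
            PathIn.suffix_lemma hu1 (by rw [PathIn.tgt_comp hw2a]; exact hab1) hwfact hcon
          exact hu3 s hsS (PathIn.div_of_suffix hm2 hm3)
        constructor
        · -- lower bound
          have := ih2.1
          push_cast
          omega
        · -- upper bound
          intro _
          have h₁ := ih1.2 (by omega)
          have hmul : (L : ℤ) * (m + 2) = (L : ℤ) * (m + 1) + L := by ring
          push_cast at h₁ ⊢
          omega
  refine ⟨key n, ?_, ?_⟩
  · apply le_sInf
    rintro b ⟨w, hw, rfl⟩
    have h := (key n w hw).1
    have h' : ((n : ℝ) + 1) ≤ ((w.len : ℕ) : ℝ) := by exact_mod_cast h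
    simp only [← EReal.coe_coe_eq_natCast, ← EReal.coe_one, ← EReal.coe_add]
    exact EReal.coe_le_coe_iff.mpr h'
  · intro hn
    apply sSup_le
    rintro b ⟨w, hw, rfl⟩
    have h := (key n w hw).2 hn
    have h' : ((w.len : ℕ) : ℝ) ≤ (L : ℝ) * n - n + 1 := by exact_mod_cast h
    simp only [← EReal.coe_coe_eq_natCast, ← EReal.coe_one, ← EReal.coe_mul,
      ← EReal.coe_sub, ← EReal.coe_add]
    exact EReal.coe_le_coe_iff.mpr h'
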